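/- If f : ℝ^n → ℝ is convex and differentiable with L-Lipschitz gradient and x* minimizes f, then the gradient descent iterates x_{k+1} = x_k − (1/L)∇f(x_k) satisfy f(x_k) − f(x*) ≤ L‖x_0 − x*‖²/(2k) for all k ≥ 1. -/

import Mathlib

open InnerProductSpace Filter Set Topology

variable {H : Type*} [NormedAddCommGroup H] [InnerProductSpace ℝ H] [CompleteSpace H]

local notation "⟪" a ", " b "⟫" => @inner ℝ _ _ a b

lemma gd_line_hasDerivAt (f : H → ℝ) (hf : Differentiable ℝ f) (x v : H) (t : ℝ) :
    HasDerivAt (fun s : ℝ => f (x + s • v)) ⟪gradient f (x + t • v), v⟫ t := by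
  have hg : HasFDerivAt f ((toDual ℝ H) (gradient f (x + t • v))) (x + t • v) :=
    hasGradientAt_iff_hasFDerivAt.mp (hf _).hasGradientAt
  have hline : HasDerivAt (fun s : ℝ => x + s • v) v t := by
    simpa using ((hasDerivAt_id t).smul_const v).const_add x
  simpa [toDual_apply_apply, Function.comp_def] using hg.comp_hasDerivAt t hline

lemma gd_first_order (f : H → ℝ) (hconv : ConvexOn ℝ Set.univ f)
    (hf : Differentiable ℝ f) (x y : H) :
    f x + ⟪gradient f x, y - x⟫ ≤ f y := by
  set v := y - x with hv
  have hd : HasDerivAt (fun s : ℝ => f (x + s • v)) ⟪gradient f x, v⟫ 0 := by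
    simpa using gd_line_hasDerivAt f hf x v 0
  have hslope : Tendsto (slope (fun s : ℝ => f (x + s • v)) 0) (𝓝[>] 0)
      (𝓝 ⟪gradient f x, v⟫) :=
    (hasDerivAt_iff_tendsto_slope.mp hd).mono_left
      (nhdsWithin_mono _ (fun t ht => ne_of_gt ht))
  have hle : ⟪gradient f x, v⟫ ≤ f y - f x := by
    refine le_of_tendsto hslope ?_
    filter_upwards [Ioo_mem_nhdsGT_of_mem (Set.left_mem_Ico.mpr zero_lt_one)] with t ht
    have ht0 : 0 < t := ht.1
    have ht1 : t < 1 := ht.2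
    have hcvx : f (x + t • v) ≤ (1 - t) * f x + t * f y := by
      have := hconv.2 (Set.mem_univ x) (Set.mem_univ y)
        (by linarith : (0:ℝ) ≤ 1 - t) (le_of_lt ht0) (by ring)
      have hxy : (1 - t) • x + t • y = x + t • v := by
        simp [hv, smul_sub, sub_smul]; module
      simpa [hxy, smul_eq_mul] using this
    rw [slope_def_field, div_le_iff₀ (by simpa using ht0)]
    simp only [zero_smul, add_zero, sub_zero]
    nlinarith
  linarith

lemma gd_descent (f : H → ℝ) (L : ℝ) (hL : 0 < L) (hf : Differentiable ℝ f)
    (hlip : ∀ x y : H, ‖gradient f x - gradient f y‖ ≤ L * ‖x - y‖)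
    (x y : H) :
    f y ≤ f x + ⟪gradient f x, y - x⟫ + L / 2 * ‖y - x‖ ^ 2 := by
  set v := y - x with hv
  set h : ℝ → ℝ := fun t => f (x + t • v) - t * ⟪gradient f x, v⟫ - L / 2 * t ^ 2 * ‖v‖ ^ 2
    with hh
  have hderiv : ∀ t : ℝ, HasDerivAt h
      (⟪gradient f (x + t • v), v⟫ - ⟪gradient f x, v⟫ - L * t * ‖v‖ ^ 2) t := by
    intro t
    have h1 := gd_line_hasDerivAt f hf x v t
    have h2 : HasDerivAt (fun t : ℝ => t * ⟪gradient f x, v⟫) ⟪gradient f x, v⟫ t := by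
      simpa using (hasDerivAt_id t).mul_const ⟪gradient f x, v⟫
    have h3 : HasDerivAt (fun t : ℝ => L / 2 * t ^ 2 * ‖v‖ ^ 2) (L * t * ‖v‖ ^ 2) t := by
      have : HasDerivAt (fun t : ℝ => t ^ 2) (2 * t) t := by
        simpa using hasDerivAt_pow 2 t
      have := (this.const_mul (L / 2)).mul_const (‖v‖ ^ 2)
      exact this.congr_deriv (by ring)
    simpa [hh, Pi.sub_def] using (h1.sub h2).sub h3
  have hcont : Continuous h := by
    have : Differentiable ℝ h := fun t => (hderiv t).differentiableAt
    exact this.continuous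
  have hanti : AntitoneOn h (Icc (0:ℝ) 1) := by
    apply antitoneOn_of_deriv_nonpos (convex_Icc 0 1) hcont.continuousOn
    · intro t ht
      exact (hderiv t).differentiableAt.differentiableWithinAt
    · intro t ht
      rw [interior_Icc] at ht
      rw [(hderiv t).deriv]
      have hb : ⟪gradient f (x + t • v) - gradient f x, v⟫ ≤ L * t * ‖v‖ ^ 2 := by
        calc ⟪gradient f (x + t • v) - gradient f x, v⟫
            ≤ ‖gradient f (x + t • v) - gradient f x‖ * ‖v‖ := real_inner_le_norm _ _
          _ ≤ (L * ‖(x + t • v) - x‖) * ‖v‖ := by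
              gcongr; exact hlip _ _
          _ = L * (|t| * ‖v‖) * ‖v‖ := by
              simp [norm_smul, abs_of_pos ht.1, Real.norm_eq_abs]
          _ = L * t * ‖v‖ ^ 2 := by rw [abs_of_pos ht.1]; ring
      have := inner_sub_left (𝕜 := ℝ) (gradient f (x + t • v)) (gradient f x) v
      linarith [hb, this.symm.le, this.le]
  have h10 : h 1 ≤ h 0 := hanti (by norm_num) (by norm_num) zero_le_one
  have h0 : h 0 = f x := by simp [hh]
  have h1 : h 1 = f y - ⟪gradient f x, v⟫ - L / 2 * ‖v‖ ^ 2 := by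
    simp [hh, hv]
  rw [h0, h1] at h10
  linarith


/-- O(1/k) rate of gradient descent: if `f` is convex and differentiable with
`L`-Lipschitz gradient, `x*` is a global minimizer, and
`x_{k+1} = x_k − (1/L)∇f(x_k)`, then
`f(x_k) − f(x*) ≤ L‖x₀ − x*‖²/(2k)` for all `k ≥ 1`. -/
theorem stmt_16 (n : ℕ) (f : EuclideanSpace ℝ (Fin n) → ℝ) (L : ℝ)
    (hL : 0 < L) (hconv : ConvexOn ℝ Set.univ f) (hf : Differentiable ℝ f)
    (hlip : ∀ x y : EuclideanSpace ℝ (Fin n),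
      ‖gradient f x - gradient f y‖ ≤ L * ‖x - y‖)
    (xstar : EuclideanSpace ℝ (Fin n)) (hmin : ∀ y, f xstar ≤ f y)
    (x : ℕ → EuclideanSpace ℝ (Fin n))
    (hiter : ∀ k, x (k + 1) = x k - (1 / L) • gradient f (x k)) :
    ∀ k : ℕ, 1 ≤ k →
      f (x k) - f xstar ≤ L * ‖x 0 - xstar‖ ^ 2 / (2 * k) := by
  have hL' : (L:ℝ) ≠ 0 := ne_of_gt hL
  -- per-step facts
  have hstep : ∀ k, x (k+1) - x k = -((1/L) • gradient f (x k)) := by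
    intro k; rw [hiter k]; abel
  have hnorm2 : ∀ k, ‖x (k+1) - x k‖ ^ 2 = (1/L)^2 * ‖gradient f (x k)‖^2 := by
    intro k
    rw [hstep k, norm_neg, norm_smul]
    simp [abs_of_pos (by positivity : (0:ℝ) < 1/L), mul_pow]
  have hinner : ∀ k, ⟪gradient f (x k), x (k+1) - x k⟫ =
      -(1/L) * ‖gradient f (x k)‖^2 := by
    intro k
    rw [hstep k, inner_neg_right, real_inner_smul_right, real_inner_self_eq_norm_sq]
    ring
  have step2 : ∀ k, f (x (k+1)) - f xstar ≤
      L/2 * ‖x k - xstar‖^2 - L/2 * ‖x (k+1) - xstar‖^2 := by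
    intro k
    have hdes := gd_descent f L hL hf hlip (x k) (x (k+1))
    have hfo := gd_first_order f hconv hf (x k) xstar
    set A := ⟪gradient f (x k), x k - xstar⟫ with hA
    set G := ‖gradient f (x k)‖^2 with hG
    have hfo' : f (x k) ≤ f xstar + A := by
      have : ⟪gradient f (x k), xstar - x k⟫ = -A := by
        rw [hA, ← inner_neg_right]; congr 1; abel
      linarith [hfo, this.symm.le, this.le]
    have hexp : ‖x (k+1) - xstar‖^2 = ‖x k - xstar‖^2 - 2*(1/L)*A + (1/L)^2 * G := by
      have h1 : x (k+1) - xstar = (x k - xstar) - (1/L) • gradient f (x k) := by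
        rw [hiter k]; abel
      rw [h1, norm_sub_sq_real, real_inner_smul_right, norm_smul]
      have : ⟪x k - xstar, gradient f (x k)⟫ = A := real_inner_comm _ _
      rw [this]
      simp [abs_of_pos (by positivity : (0:ℝ) < 1/L), mul_pow, hG]
      ring
    rw [hnorm2 k, hinner k, ← hG] at hdes
    rw [hexp]
    have hGnn : 0 ≤ G := by positivity
    have key : L/2 * ‖x k - xstar‖^2 - L/2 * (‖x k - xstar‖^2 - 2*(1/L)*A + (1/L)^2*G)
        = A - 1/(2*L) * G := by field_simp; ring
    have e1 : -(1/L) * G + L/2 * ((1/L)^2 * G) = -(1/(2*L) * G) := by field_simp; ring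
    rw [key]
    linarith [hdes, e1, hfo']
  have hdec : ∀ k, f (x (k+1)) ≤ f (x k) := by
    intro k
    have hdes := gd_descent f L hL hf hlip (x k) (x (k+1))
    rw [hnorm2 k, hinner k] at hdes
    have hGnn : 0 ≤ ‖gradient f (x k)‖^2 := by positivity
    have hZ : 0 ≤ 1/(2*L) * ‖gradient f (x k)‖^2 := by positivity
    have e1 : -(1/L) * ‖gradient f (x k)‖^2 + L/2 * ((1/L)^2 * ‖gradient f (x k)‖^2)
        = -(1/(2*L) * ‖gradient f (x k)‖^2) := by field_simp; ring
    linarith [hdes, e1, hZ]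
  have hmono : ∀ a b : ℕ, a ≤ b → f (x b) ≤ f (x a) := by
    intro a b hab
    exact antitone_nat_of_succ_le (f := fun k => f (x k)) hdec hab
  intro K hK
  have hKpos : (0:ℝ) < K := by exact_mod_cast hK
  -- telescoping sum bound
  have htel : ∑ k ∈ Finset.range K, (L/2 * ‖x k - xstar‖^2 - L/2 * ‖x (k+1) - xstar‖^2)
      = L/2 * ‖x 0 - xstar‖^2 - L/2 * ‖x K - xstar‖^2 :=
    Finset.sum_range_sub' (fun k => L/2 * ‖x k - xstar‖^2) K
  have hsum_le : ∑ k ∈ Finset.range K, (f (x (k+1)) - f xstar) ≤ L/2 * ‖x 0 - xstar‖^2 := by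
    calc ∑ k ∈ Finset.range K, (f (x (k+1)) - f xstar)
        ≤ ∑ k ∈ Finset.range K, (L/2 * ‖x k - xstar‖^2 - L/2 * ‖x (k+1) - xstar‖^2) :=
          Finset.sum_le_sum (fun k _ => step2 k)
      _ = L/2 * ‖x 0 - xstar‖^2 - L/2 * ‖x K - xstar‖^2 := htel
      _ ≤ L/2 * ‖x 0 - xstar‖^2 := by nlinarith [sq_nonneg ‖x K - xstar‖, hL]
  have hlow : (K:ℝ) * (f (x K) - f xstar) ≤ ∑ k ∈ Finset.range K, (f (x (k+1)) - f xstar) := by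
    have : ∀ k ∈ Finset.range K, f (x K) - f xstar ≤ f (x (k+1)) - f xstar := by
      intro k hk
      have := hmono (k+1) K (Finset.mem_range.mp hk)
      linarith
    calc (K:ℝ) * (f (x K) - f xstar)
        = (Finset.range K).card • (f (x K) - f xstar) := by
          simp [nsmul_eq_mul]
      _ ≤ ∑ k ∈ Finset.range K, (f (x (k+1)) - f xstar) :=
          Finset.card_nsmul_le_sum _ _ _ this
  have hmain : (K:ℝ) * (f (x K) - f xstar) ≤ L/2 * ‖x 0 - xstar‖^2 := le_trans hlow hsum_le
  rw [le_div_iff₀ (by positivity : (0:ℝ) < 2 * K)]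
  nlinarith [hmain]
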